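/- Let f : ℝ^n → ℝ be L-smooth, let φ : ℝ^n → (−∞,∞] be proper, closed, and convex, set ψ := f + φ, let M ∈ ℝ^{n×n} be symmetric positive semidefinite, let α > 0, w ∈ ℝ^n, and x ∈ dom(φ). Define x⁺ := prox_{αφ}(x − αw) and let x̄ ∈ ℝ^n satisfy the implicit equation x̄ = prox_{αφ}(x − α∇f(x̄) − αM(x̄ − x)). Then ψ(x⁺) ≤ ψ(x) + ⟨∇f(x) − ∇f(x̄), x̄ − x⟩ + ⟨∇f(x) − w, x⁺ − x̄⟩ − ⟨x̄ − x, (M + (1/(2α))I)(x̄ − x)⟩ + ½(L − 1/α)‖x⁺ − x‖² − (1/(2α))‖x⁺ − x̄‖². -/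

import Mathlib

open scoped RealInnerProductSpace

variable {E : Type*} [NormedAddCommGroup E] [InnerProductSpace ℝ E] [CompleteSpace E]

lemma line_hasDerivAt (x d : E) (t : ℝ) :
    HasDerivAt (fun s : ℝ => x + s • d) d t := by
  simpa using ((hasDerivAt_id t).smul_const d).const_add x

lemma comp_hasDerivAt (f : E → ℝ) (f' : E → E) (hf : ∀ y, HasGradientAt f (f' y) y)
    (x d : E) (t : ℝ) :
    HasDerivAt (fun s : ℝ => f (x + s • d)) ⟪f' (x + t • d), d⟫ t := by
  have h1 := (hf (x + t • d)).hasFDerivAt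
  have := h1.comp_hasDerivAt t (line_hasDerivAt x d t)
  simp at this
  exact this

lemma descent_lemma (L : ℝ) (f : E → ℝ) (f' : E → E)
    (hf : ∀ y, HasGradientAt f (f' y) y)
    (hLip : ∀ y z, ‖f' y - f' z‖ ≤ L * ‖y - z‖) (x y : E) :
    f y ≤ f x + ⟪f' x, y - x⟫ + L / 2 * ‖y - x‖ ^ 2 := by
  set d := y - x with hd
  set q : ℝ → ℝ := fun t => f (x + t • d) - t * ⟪f' x, d⟫ - t ^ 2 * (L / 2 * ‖d‖ ^ 2) with hq
  have hq' : ∀ t : ℝ, HasDerivAt q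
      (⟪f' (x + t • d), d⟫ - ⟪f' x, d⟫ - 2 * t * (L / 2 * ‖d‖ ^ 2)) t := by
    intro t
    have h1 := comp_hasDerivAt f f' hf x d t
    have h2 : HasDerivAt (fun s : ℝ => s * ⟪f' x, d⟫) ⟪f' x, d⟫ t := by
      simpa using (hasDerivAt_id t).mul_const ⟪f' x, d⟫
    have h3 : HasDerivAt (fun s : ℝ => s ^ 2 * (L / 2 * ‖d‖ ^ 2))
        (2 * t * (L / 2 * ‖d‖ ^ 2)) t := by
      simpa using (hasDerivAt_pow 2 t).mul_const (L / 2 * ‖d‖ ^ 2)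
    exact (h1.sub h2).sub h3
  have hanti : AntitoneOn q (Set.Icc 0 1) := by
    apply antitoneOn_of_deriv_nonpos (convex_Icc 0 1)
    · exact fun t _ => ((hq' t).continuousAt).continuousWithinAt
    · intro t ht
      exact ((hq' t).differentiableAt).differentiableWithinAt
    · intro t ht
      rw [interior_Icc] at ht
      rw [(hq' t).deriv]
      have hb : ⟪f' (x + t • d) - f' x, d⟫ ≤ ‖f' (x + t • d) - f' x‖ * ‖d‖ :=
        real_inner_le_norm _ _
      have hl : ‖f' (x + t • d) - f' x‖ ≤ L * (t * ‖d‖) := by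
        have := hLip (x + t • d) x
        simpa [norm_smul, abs_of_pos ht.1, mul_assoc] using this
      have hdn : (0:ℝ) ≤ ‖d‖ := norm_nonneg _
      have : ⟪f' (x + t • d), d⟫ - ⟪f' x, d⟫ ≤ L * (t * ‖d‖) * ‖d‖ := by
        rw [← inner_sub_left]
        calc ⟪f' (x + t • d) - f' x, d⟫ ≤ ‖f' (x + t • d) - f' x‖ * ‖d‖ := hb
          _ ≤ L * (t * ‖d‖) * ‖d‖ := by
              apply mul_le_mul_of_nonneg_right hl hdn
      nlinarith [this]
  have h01 := hanti (Set.left_mem_Icc.2 zero_le_one) (Set.right_mem_Icc.2 zero_le_one) zero_le_one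
  simp only [hq] at h01
  have hxy : x + (1:ℝ) • d = y := by simp [hd]
  have hx0 : x + (0:ℝ) • d = x := by simp
  rw [hxy, hx0] at h01
  nlinarith [h01]

lemma prox_subgrad (α : ℝ) (hα : 0 < α) (D : Set E) (φ : E → ℝ)
    (hφ : ConvexOn ℝ D φ) (v p : E) (hp : p ∈ D)
    (hmin : ∀ u ∈ D, α * φ p + ‖v - p‖ ^ 2 / 2 ≤ α * φ u + ‖v - u‖ ^ 2 / 2)
    (u : E) (hu : u ∈ D) :
    ⟪v - p, u - p⟫ ≤ α * (φ u - φ p) := by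
  apply le_of_forall_pos_le_add
  intro ε hε
  set c : ℝ := ‖u - p‖ ^ 2 / 2 + 1 with hc
  have hcpos : 0 < c := by positivity
  set t : ℝ := min 1 (ε / c) with ht
  have htpos : 0 < t := lt_min one_pos (div_pos hε hcpos)
  have ht1 : t ≤ 1 := min_le_left _ _
  have htε : t * c ≤ ε := by
    calc t * c ≤ (ε / c) * c := by
          apply mul_le_mul_of_nonneg_right (min_le_right _ _) hcpos.le
      _ = ε := by field_simp
  set z : E := p + t • (u - p) with hz
  have hzD : z ∈ D := by
    have := hφ.1 hp hu (by linarith : (0:ℝ) ≤ 1 - t) htpos.le (by ring)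
    have hzeq : (1 - t) • p + t • u = z := by
      rw [hz]; module
    rwa [hzeq] at this
  have hφz : φ z ≤ (1 - t) * φ p + t * φ u := by
    have := hφ.2 hp hu (by linarith : (0:ℝ) ≤ 1 - t) htpos.le (by ring)
    have hzeq : (1 - t) • p + t • u = z := by rw [hz]; module
    rwa [hzeq, smul_eq_mul, smul_eq_mul] at this
  have hmz := hmin z hzD
  have hnorm : ‖v - z‖ ^ 2 = ‖v - p‖ ^ 2 - 2 * t * ⟪v - p, u - p⟫ + t ^ 2 * ‖u - p‖ ^ 2 := by
    have hvz : v - z = (v - p) - t • (u - p) := by rw [hz]; abel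
    rw [hvz, norm_sub_sq_real, real_inner_smul_right, norm_smul]
    rw [Real.norm_eq_abs, abs_of_pos htpos]
    ring
  rw [hnorm] at hmz
  have key : t * ⟪v - p, u - p⟫ ≤ t * (α * (φ u - φ p)) + t ^ 2 * (‖u - p‖ ^ 2 / 2) := by
    nlinarith [hmz, hφz, mul_le_mul_of_nonneg_left hφz (le_of_lt hα)]
  have hsc : t * (‖u - p‖ ^ 2 / 2) ≤ ε := by
    have h1 : ‖u - p‖ ^ 2 / 2 ≤ c := by rw [hc]; linarith
    calc t * (‖u - p‖ ^ 2 / 2) ≤ t * c := by nlinarith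
      _ ≤ ε := htε
  nlinarith [key, mul_le_mul_of_nonneg_left hsc htpos.le, htpos]


/-- **Key one-step descent estimate.**
Let `f : ℝⁿ → ℝ` be `L`-smooth (gradient `f'`), let `φ` be proper, closed and convex
(domain `D`, real values `φ` on `D`, closed epigraph), `ψ := f + φ`, let `M` be a
symmetric positive semidefinite linear map, `α > 0`, `w ∈ ℝⁿ` and `x ∈ dom φ`.  Let
`x⁺ := prox_{αφ}(x − αw)` and let `x̄` satisfy `x̄ = prox_{αφ}(x − α∇f(x̄) − αM(x̄ − x))`
(both prox points encoded by their defining minimization property over `D`).  Then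
`ψ x⁺ ≤ ψ x + ⟪∇f x − ∇f x̄, x̄ − x⟫ + ⟪∇f x − w, x⁺ − x̄⟫ − ⟪x̄ − x, (M + (1/(2α))I)(x̄ − x)⟫
  + ½(L − 1/α)‖x⁺ − x‖² − (1/(2α))‖x⁺ − x̄‖²`. -/
theorem spp_one_step_descent (n : ℕ) (L α : ℝ) (hα : 0 < α)
    (f : EuclideanSpace ℝ (Fin n) → ℝ)
    (f' : EuclideanSpace ℝ (Fin n) → EuclideanSpace ℝ (Fin n))
    (hf : ∀ y, HasGradientAt f (f' y) y)
    (hLip : ∀ y z, ‖f' y - f' z‖ ≤ L * ‖y - z‖)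
    (D : Set (EuclideanSpace ℝ (Fin n))) (φ : EuclideanSpace ℝ (Fin n) → ℝ)
    (hD : D.Nonempty) (hφconv : ConvexOn ℝ D φ)
    (hφclosed : IsClosed {q : EuclideanSpace ℝ (Fin n) × ℝ | q.1 ∈ D ∧ φ q.1 ≤ q.2})
    (M : EuclideanSpace ℝ (Fin n) →L[ℝ] EuclideanSpace ℝ (Fin n))
    (hMsym : IsSelfAdjoint M) (hMpsd : ∀ y, 0 ≤ ⟪M y, y⟫)
    (w x xplus xbar : EuclideanSpace ℝ (Fin n)) (hx : x ∈ D)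
    (hxplusD : xplus ∈ D)
    (hxplus : ∀ u ∈ D, α * φ xplus + ‖(x - α • w) - xplus‖ ^ 2 / 2 ≤
      α * φ u + ‖(x - α • w) - u‖ ^ 2 / 2)
    (hxbarD : xbar ∈ D)
    (hxbar : ∀ u ∈ D,
      α * φ xbar + ‖(x - α • f' xbar - α • M (xbar - x)) - xbar‖ ^ 2 / 2 ≤
      α * φ u + ‖(x - α • f' xbar - α • M (xbar - x)) - u‖ ^ 2 / 2) :
    f xplus + φ xplus ≤
      f x + φ x + ⟪f' x - f' xbar, xbar - x⟫ + ⟪f' x - w, xplus - xbar⟫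
        - (⟪xbar - x, M (xbar - x)⟫ + (1 / (2 * α)) * ‖xbar - x‖ ^ 2)
        + (1 / 2) * (L - 1 / α) * ‖xplus - x‖ ^ 2
        - (1 / (2 * α)) * ‖xplus - xbar‖ ^ 2 := by
  have h1 := prox_subgrad α hα D φ hφconv (x - α • w) xplus hxplusD hxplus xbar hxbarD
  have h2 := prox_subgrad α hα D φ hφconv (x - α • f' xbar - α • M (xbar - x)) xbar hxbarD
    hxbar x hx
  have hdes := descent_lemma L f f' hf hLip x xplus
  have e1 : ⟪(x - α • w) - xplus, xbar - xplus⟫ =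
      ⟪x - xplus, xbar - xplus⟫ + α * ⟪w, xplus - xbar⟫ := by
    simp only [inner_sub_left, inner_sub_right, real_inner_smul_left]
    ring
  have e2 : ⟪(x - α • f' xbar - α • M (xbar - x)) - xbar, x - xbar⟫ =
      ‖xbar - x‖ ^ 2 + α * ⟪f' xbar, xbar - x⟫ + α * ⟪xbar - x, M (xbar - x)⟫ := by
    have hMc : ⟪xbar - x, M (xbar - x)⟫ = ⟪M (xbar - x), xbar - x⟫ := real_inner_comm _ _
    rw [hMc]
    simp only [← real_inner_self_eq_norm_sq, inner_sub_left, inner_sub_right,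
      real_inner_smul_left]
    rw [real_inner_comm x xbar]
    ring
  have e4 : ‖xbar - x‖ ^ 2 = ‖xplus - x‖ ^ 2 + ‖xplus - xbar‖ ^ 2
      - 2 * ⟪x - xplus, xbar - xplus⟫ := by
    simp only [← real_inner_self_eq_norm_sq, inner_sub_left, inner_sub_right]
    rw [real_inner_comm x xbar, real_inner_comm x xplus, real_inner_comm xplus xbar]
    ring
  have e3 : ⟪f' x, xplus - x⟫ = ⟪f' x, xbar - x⟫ + ⟪f' x, xplus - xbar⟫ := by
    rw [← inner_add_right]
    congr 1
    abel
  rw [e1] at h1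
  rw [e2] at h2
  have eg1 : ⟪f' x - f' xbar, xbar - x⟫ = ⟪f' x, xbar - x⟫ - ⟪f' xbar, xbar - x⟫ :=
    inner_sub_left _ _ _
  have eg2 : ⟪f' x - w, xplus - xbar⟫ = ⟪f' x, xplus - xbar⟫ - ⟪w, xplus - xbar⟫ :=
    inner_sub_left _ _ _
  rw [eg1, eg2]
  set P := ⟪x - xplus, xbar - xplus⟫ with hP
  set Gx1 := ⟪f' x, xbar - x⟫ with hGx1
  set Gx2 := ⟪f' x, xplus - xbar⟫ with hGx2
  set Gb := ⟪f' xbar, xbar - x⟫ with hGb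
  set W := ⟪w, xplus - xbar⟫ with hW
  set Mq := ⟪xbar - x, M (xbar - x)⟫ with hMq
  set A := ‖xplus - x‖ ^ 2 with hA
  set B := ‖xbar - x‖ ^ 2 with hB
  set C := ‖xplus - xbar‖ ^ 2 with hC
  clear_value P Gx1 Gx2 Gb W Mq A B C
  have hαne : α ≠ 0 := ne_of_gt hα
  have hdiv : ∀ a b : ℝ, a ≤ α * b → a / α ≤ b := by
    intro a b h
    rw [div_le_iff₀ hα]
    linarith
  have h1' : (P + α * W) / α ≤ φ xbar - φ xplus := hdiv _ _ h1
  have h2' : (B + α * Gb + α * Mq) / α ≤ φ x - φ xbar := hdiv _ _ h2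
  have h1'' : (P + α * W) / α = P / α + W := by field_simp
  have h2'' : (B + α * Gb + α * Mq) / α = B / α + Gb + Mq := by field_simp
  rw [h1''] at h1'
  rw [h2''] at h2'
  rw [e3] at hdes
  have e4' : B / α = A / α + C / α - 2 * (P / α) := by rw [e4]; ring
  have r1 : (1:ℝ) / (2 * α) * B = B / α / 2 := by ring
  have r2 : (1:ℝ) / 2 * (L - 1 / α) * A = L / 2 * A - A / α / 2 := by ring
  have r3 : (1:ℝ) / (2 * α) * C = C / α / 2 := by ring
  rw [r1, r2, r3]
  linarith [h1', h2', hdes, e4']
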